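/- Let λ, μ, r₁, s₁, r₂, s₂ ∈ ℂ with c_{L,I} := λ - μ ≠ 0, c_L := 2 - 12(λ² - μ²), Δ_{r,s} := r²/2 - s²/2 - λr + μs, h = Δ_{r₁,s₁}, h_I = r₁ - s₁, h' = Δ_{r₂,s₂}, h_I' = r₂ - s₂. Suppose there exist positive integers p, q with h_I/c_{L,I} - 1 = -q and h_I'/c_{L,I} - 1 = p. Then Δ_{r₂-r₁, s₂-s₁} = (p + q - 1)(h'/p + h/q) + (1-p)(1-q)(1/p + 1/q)(c_L - 2)/24. -/
import Mathlib


/-- The conformal weight formula for the adjoint intertwining operator: with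
`c_{L,I} = λ - μ ≠ 0`, `c_L = 2 - 12(λ² - μ²)`, `h = Δ_{r₁,s₁}`, `h_I = r₁ - s₁`,
`h' = Δ_{r₂,s₂}`, `h_I' = r₂ - s₂`, and positive integers `p, q` with
`h_I/c_{L,I} - 1 = -q` and `h_I'/c_{L,I} - 1 = p`, one has
`Δ_{r₂-r₁, s₂-s₁} = (p+q-1)(h'/p + h/q) + (1-p)(1-q)(1/p + 1/q)(c_L - 2)/24`. -/
theorem adjoint_fusion_conformal_weight (lam mu r1 s1 r2 s2 c cL h hI h' hI' : ℂ)
    (hc0 : lam - mu ≠ 0) (hc : c = lam - mu) (hcL : cL = 2 - 12 * (lam ^ 2 - mu ^ 2))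
    (hh : h = r1 ^ 2 / 2 - s1 ^ 2 / 2 - lam * r1 + mu * s1) (hhI : hI = r1 - s1)
    (hh' : h' = r2 ^ 2 / 2 - s2 ^ 2 / 2 - lam * r2 + mu * s2) (hhI' : hI' = r2 - s2)
    (p q : ℕ) (hp : 0 < p) (hq : 0 < q)
    (hq' : hI / c - 1 = -(q : ℂ)) (hp' : hI' / c - 1 = (p : ℂ)) :
    (r2 - r1) ^ 2 / 2 - (s2 - s1) ^ 2 / 2 - lam * (r2 - r1) + mu * (s2 - s1) =
      ((p : ℂ) + q - 1) * (h' / p + h / q) +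
        (1 - (p : ℂ)) * (1 - (q : ℂ)) * (1 / p + 1 / q) * ((cL - 2) / 24) := by
  subst hc hcL hh hhI hh' hhI'
  have hpc : (p : ℂ) ≠ 0 := Nat.cast_ne_zero.mpr hp.ne'
  have hqc : (q : ℂ) ≠ 0 := Nat.cast_ne_zero.mpr hq.ne'
  have hr1 : r1 = s1 + (lam - mu) * (1 - q) := by
    field_simp at hq'
    linear_combination hq'
  have hr2 : r2 = s2 + (lam - mu) * (1 + p) := by
    field_simp at hp'
    linear_combination hp'
  subst hr1 hr2
  field_simp
  ring
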